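/- Let P_i(t,x,x') be smooth functions satisfying, identically in (t,x,x'), the relation ∂P_i/∂x_j - ∂P_j/∂x_i = (1/2)[∂²P_i/∂t∂x'_j - ∂²P_j/∂t∂x'_i + Σ_k (∂²P_i/∂x_k∂x'_j - ∂²P_j/∂x_k∂x'_i) x'_k] for all i,j. Then the mixed second derivatives satisfy the cyclic identity: ∂²P_i/∂x_l∂x'_j - ∂²P_j/∂x_l∂x'_i = ∂²P_i/∂x_j∂x'_l - ∂²P_l/∂x_j∂x'_i + ∂²P_l/∂x_i∂x'_j - ∂²P_j/∂x_i∂x'_l for all i,j,l. -/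

import Mathlib

open Function

variable {n : ℕ}

/-- Partial derivative w.r.t. time of a function of (t, x, x'). -/
noncomputable def pT3 (f : ℝ → (Fin n → ℝ) → (Fin n → ℝ) → ℝ) (t : ℝ) (x v : Fin n → ℝ) : ℝ :=
  deriv (fun s => f s x v) t

/-- Partial derivative w.r.t. x_i of a function of (t, x, x'). -/
noncomputable def pX3 (f : ℝ → (Fin n → ℝ) → (Fin n → ℝ) → ℝ) (i : Fin n) (t : ℝ)
    (x v : Fin n → ℝ) : ℝ :=
  deriv (fun s => f t (Function.update x i s) v) (x i)

/-- Partial derivative w.r.t. x'_i of a function of (t, x, x'). -/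
noncomputable def pV3 (f : ℝ → (Fin n → ℝ) → (Fin n → ℝ) → ℝ) (i : Fin n) (t : ℝ)
    (x v : Fin n → ℝ) : ℝ :=
  deriv (fun s => f t x (Function.update v i s)) (v i)

/-- Partial derivative w.r.t. time of a function of (t, x, x', x''). -/
noncomputable def pT4 (F : ℝ → (Fin n → ℝ) → (Fin n → ℝ) → (Fin n → ℝ) → ℝ) (t : ℝ)
    (x v a : Fin n → ℝ) : ℝ :=
  deriv (fun s => F s x v a) t

/-- Partial derivative w.r.t. x_i of a function of (t, x, x', x''). -/
noncomputable def pX4 (F : ℝ → (Fin n → ℝ) → (Fin n → ℝ) → (Fin n → ℝ) → ℝ) (i : Fin n) (t : ℝ)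
    (x v a : Fin n → ℝ) : ℝ :=
  deriv (fun s => F t (Function.update x i s) v a) (x i)

/-- Partial derivative w.r.t. x'_i of a function of (t, x, x', x''). -/
noncomputable def pV4 (F : ℝ → (Fin n → ℝ) → (Fin n → ℝ) → (Fin n → ℝ) → ℝ) (i : Fin n) (t : ℝ)
    (x v a : Fin n → ℝ) : ℝ :=
  deriv (fun s => F t x (Function.update v i s) a) (v i)

/-- Partial derivative w.r.t. x''_i of a function of (t, x, x', x''). -/
noncomputable def pA4 (F : ℝ → (Fin n → ℝ) → (Fin n → ℝ) → (Fin n → ℝ) → ℝ) (i : Fin n) (t : ℝ)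
    (x v a : Fin n → ℝ) : ℝ :=
  deriv (fun s => F t x v (Function.update a i s)) (a i)

/-- The Euler–Lagrange expression E_i of a Lagrangian L(t,x,x'), viewed as a function of
(t, x, x', x''):  E_i = ∂²L/∂x'_i∂t + Σ_j (∂²L/∂x'_i∂x_j) x'_j + Σ_j (∂²L/∂x'_i∂x'_j) x''_j
  - ∂L/∂x_i. -/
noncomputable def EulerLagrange (L : ℝ → (Fin n → ℝ) → (Fin n → ℝ) → ℝ) (i : Fin n) (t : ℝ)
    (x v a : Fin n → ℝ) : ℝ :=
  pT3 (pV3 L i) t x v + (∑ j, pX3 (pV3 L i) j t x v * v j)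
    + (∑ j, pV3 (pV3 L i) j t x v * a j) - pX3 L i t x v

/-- The total time derivative D_t = ∂/∂t + Σ_k x'_k ∂/∂x_k + Σ_k x''_k ∂/∂x'_k acting on a
function of (t, x, x', x''). -/
noncomputable def Dt4 (F : ℝ → (Fin n → ℝ) → (Fin n → ℝ) → (Fin n → ℝ) → ℝ) (t : ℝ)
    (x v a : Fin n → ℝ) : ℝ :=
  pT4 F t x v a + (∑ k, v k * pX4 F k t x v a) + (∑ k, a k * pV4 F k t x v a)

/-- The total time derivative including the Σ_k x'''_k ∂/∂x''_k term, with x''' = b a free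
variable. -/
noncomputable def Dt5 (F : ℝ → (Fin n → ℝ) → (Fin n → ℝ) → (Fin n → ℝ) → ℝ) (b : Fin n → ℝ)
    (t : ℝ) (x v a : Fin n → ℝ) : ℝ :=
  Dt4 F t x v a + ∑ k, b k * pA4 F k t x v a

abbrev EE (n : ℕ) := ℝ × (Fin n → ℝ) × (Fin n → ℝ)

noncomputable def Dd {n : ℕ} (d : EE n) (f : EE n → ℝ) (p : EE n) : ℝ := fderiv ℝ f p d

def eTd (n : ℕ) : EE n := (1, 0, 0)
def eXd {n : ℕ} (i : Fin n) : EE n := (0, Pi.single i 1, 0)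
def eVd {n : ℕ} (i : Fin n) : EE n := (0, 0, Pi.single i 1)

lemma Dd_contDiff {n : ℕ} {f : EE n → ℝ} {m : WithTop ℕ∞} (d : EE n)
    (hf : ContDiff ℝ (m + 1) f) : ContDiff ℝ m (Dd d f) :=
  (hf.fderiv_right le_rfl).clm_apply contDiff_const

lemma Dd_swap {n : ℕ} {f : EE n → ℝ} (hf : ContDiff ℝ 2 f) (d1 d2 : EE n) (p : EE n) :
    Dd d1 (Dd d2 f) p = Dd d2 (Dd d1 f) p := by
  have hdf : Differentiable ℝ (fderiv ℝ f) :=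
    (hf.fderiv_right (m := 1) (by norm_num)).differentiable (by norm_num)
  have key : ∀ da db : EE n, Dd da (Dd db f) p = fderiv ℝ (fderiv ℝ f) p da db := by
    intro da db
    have h : fderiv ℝ (fun q => fderiv ℝ f q db) p = (fderiv ℝ (fderiv ℝ f) p).flip db := by
      rw [fderiv_clm_apply (hdf p) (differentiableAt_const db)]
      simp
    show fderiv ℝ (fun q => fderiv ℝ f q db) p da = _
    rw [h]; rfl
  rw [key d1 d2, key d2 d1]
  exact (hf.contDiffAt.isSymmSndFDerivAt (by norm_num)).eq d1 d2

lemma Dd_swap3 {n : ℕ} {f : EE n → ℝ} (hf : ContDiff ℝ 3 f) (d d1 d2 : EE n) (p : EE n) :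
    Dd d1 (Dd d (Dd d2 f)) p = Dd d2 (Dd d (Dd d1 f)) p := by
  have h2 : ∀ e : EE n, ContDiff ℝ 2 (Dd e f) := fun e =>
    Dd_contDiff e (by exact_mod_cast hf)
  have hf2 : ContDiff ℝ 2 f := hf.of_le (by norm_num)
  calc Dd d1 (Dd d (Dd d2 f)) p = Dd d (Dd d1 (Dd d2 f)) p := Dd_swap (h2 d2) d1 d p
    _ = Dd d (Dd d2 (Dd d1 f)) p := by
        have : Dd d1 (Dd d2 f) = Dd d2 (Dd d1 f) := funext fun q => Dd_swap hf2 d1 d2 q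
        rw [this]
    _ = Dd d2 (Dd d (Dd d1 f)) p := (Dd_swap (h2 d1) d2 d p).symm

lemma deriv_along {n : ℕ} (f : EE n → ℝ) (c d : EE n) (s0 : ℝ)
    (hf : DifferentiableAt ℝ f (c + s0 • d)) :
    deriv (fun s => f (c + s • d)) s0 = Dd d f (c + s0 • d) := by
  have h : HasDerivAt (fun s : ℝ => c + s • d) d s0 := by
    simpa using ((hasDerivAt_id s0).smul_const d).const_add c
  exact (hf.hasFDerivAt.comp_hasDerivAt s0 h).deriv

lemma pX3_eq {n : ℕ} (F : EE n → ℝ) (i : Fin n) (t : ℝ) (x v : Fin n → ℝ)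
    (hf : DifferentiableAt ℝ F (t, x, v)) :
    pX3 (fun t x v => F (t, x, v)) i t x v = Dd (eXd i) F (t, x, v) := by
  have hpt : ∀ s : ℝ, ((t, Function.update x i 0, v) : EE n) + s • eXd i
      = (t, Function.update x i s, v) := by
    intro s
    refine Prod.ext (by simp [eXd]) (Prod.ext ?_ (by simp [eXd]))
    funext j
    by_cases h : j = i
    · subst h; simp [eXd]
    · simp [eXd, Function.update_of_ne h, Pi.single_apply, h]
  have h0 : ((t, Function.update x i 0, v) : EE n) + (x i) • eXd i = (t, x, v) := by
    rw [hpt (x i)]; simp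
  have := deriv_along F (t, Function.update x i 0, v) (eXd i) (x i) (by rw [h0]; exact hf)
  rw [h0] at this
  rw [← this]
  unfold pX3
  congr 1
  funext s
  rw [hpt s]

lemma pV3_eq {n : ℕ} (F : EE n → ℝ) (i : Fin n) (t : ℝ) (x v : Fin n → ℝ)
    (hf : DifferentiableAt ℝ F (t, x, v)) :
    pV3 (fun t x v => F (t, x, v)) i t x v = Dd (eVd i) F (t, x, v) := by
  have hpt : ∀ s : ℝ, ((t, x, Function.update v i 0) : EE n) + s • eVd i
      = (t, x, Function.update v i s) := by
    intro s
    refine Prod.ext (by simp [eVd]) (Prod.ext (by simp [eVd]) ?_)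
    funext j
    by_cases h : j = i
    · subst h; simp [eVd]
    · simp [eVd, Function.update_of_ne h, Pi.single_apply, h]
  have h0 : ((t, x, Function.update v i 0) : EE n) + (v i) • eVd i = (t, x, v) := by
    rw [hpt (v i)]; simp
  have := deriv_along F (t, x, Function.update v i 0) (eVd i) (v i) (by rw [h0]; exact hf)
  rw [h0] at this
  rw [← this]
  unfold pV3
  congr 1
  funext s
  rw [hpt s]

lemma pT3_eq {n : ℕ} (F : EE n → ℝ) (t : ℝ) (x v : Fin n → ℝ)
    (hf : DifferentiableAt ℝ F (t, x, v)) :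
    pT3 (fun t x v => F (t, x, v)) t x v = Dd (eTd n) F (t, x, v) := by
  have hpt : ∀ s : ℝ, ((0, x, v) : EE n) + s • eTd n = (s, x, v) := by
    intro s; refine Prod.ext (by simp [eTd]) (Prod.ext (by simp [eTd]) (by simp [eTd]))
  have h0 : ((0, x, v) : EE n) + t • eTd n = (t, x, v) := hpt t
  have := deriv_along F (0, x, v) (eTd n) t (by rw [h0]; exact hf)
  rw [h0] at this
  rw [← this]
  unfold pT3
  congr 1
  funext s
  rw [hpt s]

lemma Dd_sub {n : ℕ} {f g : EE n → ℝ} (d p : EE n) (hf : DifferentiableAt ℝ f p)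
    (hg : DifferentiableAt ℝ g p) :
    Dd d (fun q => f q - g q) p = Dd d f p - Dd d g p := by
  unfold Dd; rw [fderiv_fun_sub hf hg]; rfl

lemma Dd_const_mul {n : ℕ} {f : EE n → ℝ} (c : ℝ) (d p : EE n)
    (hf : DifferentiableAt ℝ f p) :
    Dd d (fun q => c * f q) p = c * Dd d f p := by
  unfold Dd; rw [fderiv_const_mul hf c]; rfl

lemma Dd_mul {n : ℕ} {f g : EE n → ℝ} (d p : EE n) (hf : DifferentiableAt ℝ f p)
    (hg : DifferentiableAt ℝ g p) :
    Dd d (fun q => f q * g q) p = f p * Dd d g p + g p * Dd d f p := by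
  unfold Dd; rw [fderiv_fun_mul hf hg]; simp [mul_comm]

lemma Dd_sum {n : ℕ} {ι : Type*} (s : Finset ι) (f : ι → EE n → ℝ) (d p : EE n)
    (hf : ∀ k ∈ s, DifferentiableAt ℝ (f k) p) :
    Dd d (fun q => ∑ k ∈ s, f k q) p = ∑ k ∈ s, Dd d (f k) p := by
  unfold Dd; rw [fderiv_fun_sum hf]; simp

noncomputable def vcoordL (n : ℕ) (k : Fin n) : EE n →L[ℝ] ℝ :=
  (ContinuousLinearMap.proj k).comp
    ((ContinuousLinearMap.snd ℝ (Fin n → ℝ) (Fin n → ℝ)).comp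
      (ContinuousLinearMap.snd ℝ ℝ ((Fin n → ℝ) × (Fin n → ℝ))))

lemma vcoord_eq (n : ℕ) (k : Fin n) : (fun q : EE n => q.2.2 k) = ⇑(vcoordL n k) := rfl

lemma Dd_vcoord {n : ℕ} (k : Fin n) (d p : EE n) :
    Dd d (fun q : EE n => q.2.2 k) p = d.2.2 k := by
  unfold Dd; rw [vcoord_eq, ContinuousLinearMap.fderiv]; rfl

lemma vcoord_differentiable {n : ℕ} (k : Fin n) :
    Differentiable ℝ (fun q : EE n => q.2.2 k) := by
  rw [vcoord_eq]; exact (vcoordL n k).differentiable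

lemma Dd_add {n : ℕ} {f g : EE n → ℝ} (d p : EE n) (hf : DifferentiableAt ℝ f p)
    (hg : DifferentiableAt ℝ g p) :
    Dd d (fun q => f q + g q) p = Dd d f p + Dd d g p := by
  unfold Dd; rw [fderiv_fun_add hf hg]; rfl

lemma master {n : ℕ} (F : Fin n → EE n → ℝ) (hF : ∀ a, ContDiff ℝ 3 (F a))
    (hyp : ∀ a b : Fin n, ∀ p : EE n,
      Dd (eXd b) (F a) p - Dd (eXd a) (F b) p
        = (1/2) * (Dd (eTd n) (Dd (eVd b) (F a)) p - Dd (eTd n) (Dd (eVd a) (F b)) p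
            + ∑ k, (Dd (eXd k) (Dd (eVd b) (F a)) p - Dd (eXd k) (Dd (eVd a) (F b)) p) * p.2.2 k))
    (i j l : Fin n) (p : EE n) :
    Dd (eVd l) (Dd (eXd j) (F i)) p - Dd (eVd l) (Dd (eXd i) (F j)) p
      = (1/2) * (Dd (eVd l) (Dd (eTd n) (Dd (eVd j) (F i))) p
            - Dd (eVd l) (Dd (eTd n) (Dd (eVd i) (F j))) p
          + (∑ k, (Dd (eVd l) (Dd (eXd k) (Dd (eVd j) (F i))) p
              - Dd (eVd l) (Dd (eXd k) (Dd (eVd i) (F j))) p) * p.2.2 k)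
          + (Dd (eXd l) (Dd (eVd j) (F i)) p - Dd (eXd l) (Dd (eVd i) (F j)) p)) := by
  have h3 : ∀ a, ContDiff ℝ ((2 : WithTop ℕ∞) + 1) (F a) := fun a => (hF a).of_le (by norm_num)
  have hC2 : ∀ a (e : EE n), ContDiff ℝ 2 (Dd e (F a)) := fun a e => Dd_contDiff e (h3 a)
  have hC1 : ∀ a (e e' : EE n), ContDiff ℝ 1 (Dd e' (Dd e (F a))) := fun a e e' =>
    Dd_contDiff e' ((hC2 a e).of_le (by norm_num))
  have hd1 : ∀ a (e : EE n), Differentiable ℝ (Dd e (F a)) := fun a e =>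
    (hC2 a e).differentiable (by norm_num)
  have hd2 : ∀ a (e e' : EE n), Differentiable ℝ (Dd e' (Dd e (F a))) := fun a e e' =>
    (hC1 a e e').differentiable (by norm_num)
  have hdsub : DifferentiableAt ℝ
      (fun q : EE n => Dd (eTd n) (Dd (eVd j) (F i)) q - Dd (eTd n) (Dd (eVd i) (F j)) q) p :=
    ((hd2 i (eVd j) (eTd n)) p).sub ((hd2 j (eVd i) (eTd n)) p)
  have hdterm : ∀ k : Fin n, DifferentiableAt ℝ
      (fun q : EE n => (Dd (eXd k) (Dd (eVd j) (F i)) q - Dd (eXd k) (Dd (eVd i) (F j)) q)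
        * q.2.2 k) p := fun k =>
    (((hd2 i (eVd j) (eXd k)) p).sub ((hd2 j (eVd i) (eXd k)) p)).mul
      ((vcoord_differentiable k) p)
  have hdsum : DifferentiableAt ℝ
      (fun q : EE n => ∑ k, (Dd (eXd k) (Dd (eVd j) (F i)) q
        - Dd (eXd k) (Dd (eVd i) (F j)) q) * q.2.2 k) p :=
    DifferentiableAt.fun_sum fun k _ => hdterm k
  have hfun : (fun q : EE n => Dd (eXd j) (F i) q - Dd (eXd i) (F j) q)
      = (fun q : EE n => (1/2 : ℝ) * (Dd (eTd n) (Dd (eVd j) (F i)) q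
          - Dd (eTd n) (Dd (eVd i) (F j)) q
          + ∑ k, (Dd (eXd k) (Dd (eVd j) (F i)) q - Dd (eXd k) (Dd (eVd i) (F j)) q)
            * q.2.2 k)) := funext (hyp i j)
  have key := congrArg (fun g => Dd (eVd l) g p) hfun
  beta_reduce at key
  rw [Dd_sub _ _ ((hd1 i (eXd j)) p) ((hd1 j (eXd i)) p)] at key
  rw [Dd_const_mul _ _ _ (hdsub.fun_add hdsum)] at key
  rw [Dd_add _ _ hdsub hdsum] at key
  rw [Dd_sub _ _ ((hd2 i (eVd j) (eTd n)) p) ((hd2 j (eVd i) (eTd n)) p)] at key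
  rw [Dd_sum Finset.univ _ _ _ (fun k _ => hdterm k)] at key
  have hterm : ∀ k : Fin n,
      Dd (eVd l) (fun q : EE n => (Dd (eXd k) (Dd (eVd j) (F i)) q
        - Dd (eXd k) (Dd (eVd i) (F j)) q) * q.2.2 k) p
      = (Dd (eVd l) (Dd (eXd k) (Dd (eVd j) (F i))) p
          - Dd (eVd l) (Dd (eXd k) (Dd (eVd i) (F j))) p) * p.2.2 k
        + (Dd (eXd k) (Dd (eVd j) (F i)) p - Dd (eXd k) (Dd (eVd i) (F j)) p)
          * ((Pi.single l 1 : Fin n → ℝ) k) := by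
    intro k
    rw [Dd_mul _ _ (((hd2 i (eVd j) (eXd k)) p).fun_sub ((hd2 j (eVd i) (eXd k)) p))
      ((vcoord_differentiable k) p)]
    rw [Dd_vcoord k (eVd l) p]
    rw [Dd_sub _ _ ((hd2 i (eVd j) (eXd k)) p) ((hd2 j (eVd i) (eXd k)) p)]
    show _ * ((eVd l).2.2 k) + _ = _
    have h : (eVd l).2.2 k = (Pi.single l 1 : Fin n → ℝ) k := rfl
    rw [h]; ring
  rw [Finset.sum_congr rfl (fun k _ => hterm k), Finset.sum_add_distrib] at key
  have hsingle : ∑ k, (Dd (eXd k) (Dd (eVd j) (F i)) p - Dd (eXd k) (Dd (eVd i) (F j)) p)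
      * ((Pi.single l 1 : Fin n → ℝ) k)
      = Dd (eXd l) (Dd (eVd j) (F i)) p - Dd (eXd l) (Dd (eVd i) (F j)) p := by
    rw [Finset.sum_eq_single l (fun b _ hb => by simp [Pi.single_apply, hb, Ne.symm hb])
      (fun h => absurd (Finset.mem_univ l) h)]
    simp
  rw [hsingle] at key
  linarith [key]

lemma final_cyclic {n : ℕ} (F : Fin n → EE n → ℝ) (hF : ∀ a, ContDiff ℝ 3 (F a))
    (hyp : ∀ a b : Fin n, ∀ p : EE n,
      Dd (eXd b) (F a) p - Dd (eXd a) (F b) p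
        = (1/2) * (Dd (eTd n) (Dd (eVd b) (F a)) p - Dd (eTd n) (Dd (eVd a) (F b)) p
            + ∑ k, (Dd (eXd k) (Dd (eVd b) (F a)) p - Dd (eXd k) (Dd (eVd a) (F b)) p) * p.2.2 k))
    (i j l : Fin n) (p : EE n) :
    Dd (eXd l) (Dd (eVd j) (F i)) p - Dd (eXd l) (Dd (eVd i) (F j)) p
      = Dd (eXd j) (Dd (eVd l) (F i)) p - Dd (eXd j) (Dd (eVd i) (F l)) p
        + Dd (eXd i) (Dd (eVd j) (F l)) p - Dd (eXd i) (Dd (eVd l) (F j)) p := by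
  have hF2 : ∀ a, ContDiff ℝ 2 (F a) := fun a => (hF a).of_le (by norm_num)
  have E1 := master F hF hyp i j l p
  have E2 := master F hF hyp j l i p
  have E3 := master F hF hyp l i j p
  rw [Dd_swap (hF2 i) (eVd l) (eXd j) p, Dd_swap (hF2 j) (eVd l) (eXd i) p] at E1
  rw [Dd_swap (hF2 j) (eVd i) (eXd l) p, Dd_swap (hF2 l) (eVd i) (eXd j) p] at E2
  rw [Dd_swap (hF2 l) (eVd j) (eXd i) p, Dd_swap (hF2 i) (eVd j) (eXd l) p] at E3
  have t1 := Dd_swap3 (hF i) (eTd n) (eVd l) (eVd j) p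
  have t2 := Dd_swap3 (hF j) (eTd n) (eVd l) (eVd i) p
  have t3 := Dd_swap3 (hF l) (eTd n) (eVd i) (eVd j) p
  have hS : (∑ k, (Dd (eVd l) (Dd (eXd k) (Dd (eVd j) (F i))) p
        - Dd (eVd l) (Dd (eXd k) (Dd (eVd i) (F j))) p) * p.2.2 k)
      + (∑ k, (Dd (eVd i) (Dd (eXd k) (Dd (eVd l) (F j))) p
        - Dd (eVd i) (Dd (eXd k) (Dd (eVd j) (F l))) p) * p.2.2 k)
      + (∑ k, (Dd (eVd j) (Dd (eXd k) (Dd (eVd i) (F l))) p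
        - Dd (eVd j) (Dd (eXd k) (Dd (eVd l) (F i))) p) * p.2.2 k) = 0 := by
    rw [← Finset.sum_add_distrib, ← Finset.sum_add_distrib]
    apply Finset.sum_eq_zero
    intro k _
    rw [Dd_swap3 (hF i) (eXd k) (eVd l) (eVd j) p, Dd_swap3 (hF j) (eXd k) (eVd l) (eVd i) p,
      Dd_swap3 (hF l) (eXd k) (eVd i) (eVd j) p]
    ring
  linarith [E1, E2, E3, t1, t2, t3, hS]

/-- if C³ functions P_i(t,x,x') satisfy
∂P_i/∂x_j - ∂P_j/∂x_i = (1/2)[∂²P_i/∂t∂x'_j - ∂²P_j/∂t∂x'_i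
  + Σ_k (∂²P_i/∂x_k∂x'_j - ∂²P_j/∂x_k∂x'_i) x'_k] identically, then the cyclic identity
for mixed second derivatives holds. -/
theorem helmholtz_P_cyclic_identity (n : ℕ)
    (P : Fin n → ℝ → (Fin n → ℝ) → (Fin n → ℝ) → ℝ)
    (hP : ∀ i, ContDiff ℝ 3 (fun p : ℝ × (Fin n → ℝ) × (Fin n → ℝ) => P i p.1 p.2.1 p.2.2))
    (hyp : ∀ (i j : Fin n) (t : ℝ) (x v : Fin n → ℝ),
      pX3 (P i) j t x v - pX3 (P j) i t x v
        = (1 / 2) * (pT3 (pV3 (P i) j) t x v - pT3 (pV3 (P j) i) t x v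
            + ∑ k, (pX3 (pV3 (P i) j) k t x v - pX3 (pV3 (P j) i) k t x v) * v k)) :
    ∀ (i j l : Fin n) (t : ℝ) (x v : Fin n → ℝ),
      pX3 (pV3 (P i) j) l t x v - pX3 (pV3 (P j) i) l t x v
        = pX3 (pV3 (P i) l) j t x v - pX3 (pV3 (P l) i) j t x v
          + pX3 (pV3 (P l) j) i t x v - pX3 (pV3 (P j) l) i t x v := by
  intro i j l t x v
  have hdF : ∀ a, Differentiable ℝ (fun p : EE n => P a p.1 p.2.1 p.2.2) := fun a =>
    (hP a).differentiable (by norm_num)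
  have h3 : ∀ a, ContDiff ℝ ((2 : WithTop ℕ∞) + 1) (fun p : EE n => P a p.1 p.2.1 p.2.2) :=
    fun a => (hP a).of_le (by norm_num)
  have hd1 : ∀ a (e : EE n), Differentiable ℝ (Dd e (fun p : EE n => P a p.1 p.2.1 p.2.2)) :=
    fun a e => (Dd_contDiff e (h3 a)).differentiable (by norm_num)
  have cv0 : ∀ (a b : Fin n) (t' : ℝ) (x' v' : Fin n → ℝ), pX3 (P a) b t' x' v'
      = Dd (eXd b) (fun p : EE n => P a p.1 p.2.1 p.2.2) (t', x', v') := fun a b t' x' v' =>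
    pX3_eq _ b t' x' v' ((hdF a) _)
  have cv1 : ∀ (a b : Fin n), pV3 (P a) b
      = fun t' x' v' => Dd (eVd b) (fun p : EE n => P a p.1 p.2.1 p.2.2) (t', x', v') :=
    fun a b => funext fun t' => funext fun x' => funext fun v' =>
      pV3_eq _ b t' x' v' ((hdF a) _)
  have cv2 : ∀ (a b c : Fin n) (t' : ℝ) (x' v' : Fin n → ℝ), pX3 (pV3 (P a) b) c t' x' v'
      = Dd (eXd c) (Dd (eVd b) (fun p : EE n => P a p.1 p.2.1 p.2.2)) (t', x', v') := by
    intro a b c t' x' v'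
    rw [cv1 a b]
    exact pX3_eq _ c t' x' v' ((hd1 a (eVd b)) _)
  have cv3 : ∀ (a b : Fin n) (t' : ℝ) (x' v' : Fin n → ℝ), pT3 (pV3 (P a) b) t' x' v'
      = Dd (eTd n) (Dd (eVd b) (fun p : EE n => P a p.1 p.2.1 p.2.2)) (t', x', v') := by
    intro a b t' x' v'
    rw [cv1 a b]
    exact pT3_eq _ t' x' v' ((hd1 a (eVd b)) _)
  have hyp' : ∀ a b : Fin n, ∀ p : EE n,
      Dd (eXd b) (fun q : EE n => P a q.1 q.2.1 q.2.2) p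
        - Dd (eXd a) (fun q : EE n => P b q.1 q.2.1 q.2.2) p
      = (1/2) * (Dd (eTd n) (Dd (eVd b) (fun q : EE n => P a q.1 q.2.1 q.2.2)) p
          - Dd (eTd n) (Dd (eVd a) (fun q : EE n => P b q.1 q.2.1 q.2.2)) p
          + ∑ k, (Dd (eXd k) (Dd (eVd b) (fun q : EE n => P a q.1 q.2.1 q.2.2)) p
            - Dd (eXd k) (Dd (eVd a) (fun q : EE n => P b q.1 q.2.1 q.2.2)) p) * p.2.2 k) := by
    intro a b p
    have h := hyp a b p.1 p.2.1 p.2.2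
    rw [cv0 a b, cv0 b a, cv3 a b, cv3 b a] at h
    simp only [cv2] at h
    simpa using h
  rw [cv2 i j l, cv2 j i l, cv2 i l j, cv2 l i j, cv2 l j i, cv2 j l i]
  exact final_cyclic (fun a p => P a p.1 p.2.1 p.2.2) hP hyp' i j l (t, x, v)
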